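/- For every prime p, every ε > 0, and every j not divisible by p, if d ≥ 2·log₂(2p)/ε then there exist k_1, ..., k_d ∈ {0, ..., p−1} such that for all j ∈ {1, ..., p−1}, (1/d²)·(Σ_{i=1}^d cos(2πk_i j / p))² < ε. -/

import Mathlib

open Real

lemma aux_sum_cos_eq_zero {p j : ℕ} (hj1 : 1 ≤ j) (hjp : j < p) :
    ∑ m : Fin p, Real.cos (2 * Real.pi * (m : ℝ) * (j : ℝ) / p) = 0 := by
  have hp0 : (0:ℝ) < p := by have : 0 < p := by omega
                             exact_mod_cast this
  set θ : ℝ := 2 * Real.pi * j / p with hθ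
  set z : ℂ := Complex.exp (θ * Complex.I) with hz
  have hθpos : 0 < θ := by
    have : (0:ℝ) < j := by exact_mod_cast hj1
    rw [hθ]; positivity
  have hθlt : θ < 2 * Real.pi := by
    rw [hθ, div_lt_iff₀ hp0]
    have : (j:ℝ) < p := by exact_mod_cast hjp
    nlinarith [Real.pi_pos]
  have hz1 : z ≠ 1 := by
    intro h
    rw [hz, Complex.exp_eq_one_iff] at h
    obtain ⟨n, hn⟩ := h
    have h2 : (θ:ℂ) = ((n * (2 * Real.pi) : ℝ) : ℂ) := by
      have hn' : (θ:ℂ) * Complex.I = ((n * (2 * Real.pi) : ℝ) : ℂ) * Complex.I := by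
        rw [hn]; push_cast; ring
      exact mul_right_cancel₀ Complex.I_ne_zero hn'
    have h3 : θ = n * (2 * Real.pi) := by exact_mod_cast h2
    have hn0 : (0:ℝ) < n := by nlinarith [Real.pi_pos]
    have hn1 : (1:ℝ) ≤ n := by exact_mod_cast Int.cast_pos.mp hn0
    nlinarith [Real.pi_pos]
  have hzp : z ^ p = 1 := by
    rw [hz, ← Complex.exp_nat_mul, Complex.exp_eq_one_iff]
    refine ⟨j, ?_⟩
    have hp0' : (p:ℂ) ≠ 0 := by exact_mod_cast hp0.ne'
    rw [hθ]; push_cast; field_simp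
  have hsum : ∑ m ∈ Finset.range p, z ^ m = 0 := by
    rw [geom_sum_eq hz1, hzp]; simp
  have hterm : ∀ m : ℕ, Real.cos (2 * Real.pi * (m : ℝ) * (j : ℝ) / p) = (z ^ m).re := by
    intro m
    rw [hz, ← Complex.exp_nat_mul]
    have : (m : ℂ) * (θ * Complex.I) = ((m * θ : ℝ) : ℂ) * Complex.I := by push_cast; ring
    rw [this, Complex.exp_ofReal_mul_I_re, hθ]
    ring_nf
  calc ∑ m : Fin p, Real.cos (2 * Real.pi * (m : ℝ) * (j : ℝ) / p)
      = ∑ m ∈ Finset.range p, (z ^ m).re := by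
        rw [← Fin.sum_univ_eq_sum_range (fun m => (z ^ m).re) p]
        exact Finset.sum_congr rfl fun m _ => hterm m
    _ = (∑ m ∈ Finset.range p, z ^ m).re := by rw [Complex.re_sum]
    _ = 0 := by rw [hsum]; rfl

lemma aux_exp_mul_le {x : ℝ} (t : ℝ) (hx : |x| ≤ 1) :
    Real.exp (t * x) ≤ Real.cosh t + x * Real.sinh t := by
  have h1 : -1 ≤ x := neg_le_of_abs_le hx
  have h2 : x ≤ 1 := le_of_abs_le hx
  have hc := convexOn_exp.2 (Set.mem_univ t) (Set.mem_univ (-t))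
      (by linarith : (0:ℝ) ≤ (1+x)/2) (by linarith : (0:ℝ) ≤ (1-x)/2) (by ring)
  simp only [smul_eq_mul] at hc
  have harg : (1+x)/2 * t + (1-x)/2 * (-t) = t * x := by ring
  rw [harg] at hc
  have : (1+x)/2 * Real.exp t + (1-x)/2 * Real.exp (-t)
      = Real.cosh t + x * Real.sinh t := by
    rw [Real.cosh_eq, Real.sinh_eq]; ring
  linarith

/-- Existence of a good sequence of parameters `k_1, …, k_d ∈ {0,…,p-1}` such that
for every residue `j ∈ {1,…,p-1}`, `(1/d²)(∑ᵢ cos(2πkᵢj/p))² < ε`,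
whenever `d ≥ 2·log₂(2p)/ε`. -/
theorem exists_good_parameters (p : ℕ) (hp : p.Prime) (ε : ℝ) (hε : 0 < ε)
    (d : ℕ) (hd : 2 * Real.logb 2 (2 * p) / ε ≤ d) :
    ∃ k : Fin d → ℕ, (∀ i, k i < p) ∧
      ∀ j ∈ Finset.Ico 1 p,
        (1 / (d : ℝ) ^ 2) *
          (∑ i, Real.cos (2 * Real.pi * (k i : ℝ) * (j : ℝ) / p)) ^ 2 < ε := by
  have hp2 : 2 ≤ p := hp.two_le
  have hp0 : (0:ℝ) < p := by exact_mod_cast (by omega : 0 < p)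
  have hp1 : (2:ℝ) ≤ p := by exact_mod_cast hp2
  have h2p1 : (1:ℝ) < 2 * p := by nlinarith
  have hlogpos : 0 < Real.log (2*p) := Real.log_pos h2p1
  have hlogb : 0 < Real.logb 2 (2*(p:ℝ)) := Real.logb_pos one_lt_two h2p1
  have hdpos : 0 < (d:ℝ) := by
    have : 0 < 2 * Real.logb 2 (2*(p:ℝ)) / ε := by positivity
    linarith
  have hkey : Real.log (2*(p:ℝ)) < ε * d / 2 := by
    have h1 : Real.logb 2 (2*(p:ℝ)) ≤ ε * d / 2 := by
      rw [div_le_iff₀ hε] at hd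
      linarith
    have h2 : Real.log (2*(p:ℝ)) < Real.logb 2 (2*(p:ℝ)) := by
      rw [Real.logb, lt_div_iff₀ (Real.log_pos one_lt_two)]
      nlinarith [Real.log_two_lt_d9]
    linarith
  set l : ℝ := Real.sqrt ε with hldef
  have hl0 : 0 < l := Real.sqrt_pos.2 hε
  have hl2 : l ^ 2 = ε := Real.sq_sqrt hε.le
  have : Nonempty (Fin p) := ⟨⟨0, by omega⟩⟩
  set S : (Fin d → Fin p) → ℕ → ℝ :=
    fun k j => ∑ i, Real.cos (2 * Real.pi * ((k i : ℕ) : ℝ) * (j : ℝ) / p) with hS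
  set E : ℝ := Real.exp (d * ε / 2) with hE
  have hEpos : 0 < E := Real.exp_pos _
  -- MGF bound for each sign and residue
  have hbound : ∀ t : ℝ, t ^ 2 = ε → ∀ j ∈ Finset.Ico 1 p,
      ∑ k : Fin d → Fin p, Real.exp (t * S k j) ≤ (p:ℝ) ^ d * E := by
    intro t ht j hj
    obtain ⟨hj1, hjp⟩ := Finset.mem_Ico.mp hj
    have hrow : ∑ m : Fin p, Real.exp (t * Real.cos (2 * Real.pi * (m:ℝ) * (j:ℝ) / p))
        ≤ (p:ℝ) * Real.exp (ε / 2) := by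
      calc ∑ m : Fin p, Real.exp (t * Real.cos (2 * Real.pi * (m:ℝ) * (j:ℝ) / p))
          ≤ ∑ m : Fin p, (Real.cosh t + Real.cos (2 * Real.pi * (m:ℝ) * (j:ℝ) / p) * Real.sinh t) :=
            Finset.sum_le_sum fun m _ => aux_exp_mul_le t (Real.abs_cos_le_one _)
        _ = (p:ℝ) * Real.cosh t
            + (∑ m : Fin p, Real.cos (2 * Real.pi * (m:ℝ) * (j:ℝ) / p)) * Real.sinh t := by
            rw [Finset.sum_add_distrib, ← Finset.sum_mul, Finset.sum_const, Finset.card_univ,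
              Fintype.card_fin]
            push_cast; ring
        _ = (p:ℝ) * Real.cosh t := by rw [aux_sum_cos_eq_zero hj1 hjp]; ring
        _ ≤ (p:ℝ) * Real.exp (ε / 2) := by
            have h := Real.cosh_le_exp_half_sq t
            rw [ht] at h
            exact mul_le_mul_of_nonneg_left h hp0.le
    calc ∑ k : Fin d → Fin p, Real.exp (t * S k j)
        = ∑ k : Fin d → Fin p, ∏ i : Fin d,
            Real.exp (t * Real.cos (2 * Real.pi * ((k i : ℕ):ℝ) * (j:ℝ) / p)) := by
          refine Finset.sum_congr rfl fun k _ => ?_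
          rw [hS, Finset.mul_sum, Real.exp_sum]
      _ = ∏ i : Fin d, ∑ m : Fin p,
            Real.exp (t * Real.cos (2 * Real.pi * ((m : ℕ):ℝ) * (j:ℝ) / p)) := by
          rw [Finset.prod_univ_sum, Fintype.piFinset_univ]
      _ ≤ ∏ _i : Fin d, ((p:ℝ) * Real.exp (ε / 2)) := by
          refine Finset.prod_le_prod (fun i _ => ?_) (fun i _ => hrow)
          positivity
      _ = (p:ℝ) ^ d * E := by
          rw [Finset.prod_const, Finset.card_univ, Fintype.card_fin, mul_pow, hE,
            ← Real.exp_nat_mul]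
          ring_nf
  set F : (Fin d → Fin p) → ℝ :=
    fun k => ∑ j ∈ Finset.Ico 1 p, (Real.exp (l * S k j) + Real.exp (-(l * S k j))) with hF
  have htot : ∑ k : Fin d → Fin p, F k ≤ (p:ℝ) ^ d * ((p:ℝ) * (2 * E)) := by
    rw [hF, Finset.sum_comm]
    calc ∑ j ∈ Finset.Ico 1 p, ∑ k : Fin d → Fin p,
            (Real.exp (l * S k j) + Real.exp (-(l * S k j)))
        ≤ ∑ j ∈ Finset.Ico 1 p, ((p:ℝ) ^ d * E + (p:ℝ) ^ d * E) := by
          refine Finset.sum_le_sum fun j hj => ?_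
          rw [Finset.sum_add_distrib]
          have h1 := hbound l hl2 j hj
          have h2 := hbound (-l) (by rw [← hl2]; ring) j hj
          simp only [neg_mul] at h2
          exact add_le_add h1 h2
      _ ≤ (p:ℝ) ^ d * ((p:ℝ) * (2 * E)) := by
          rw [Finset.sum_const, Nat.card_Ico]
          have hcard : ((p - 1 : ℕ) : ℝ) ≤ (p:ℝ) := by
            have : (p - 1 : ℕ) ≤ p := Nat.sub_le _ _
            exact_mod_cast this
          have hpE : 0 ≤ (p:ℝ)^d * E := by positivity
          rw [nsmul_eq_mul]
          nlinarith
  have hex : ∃ k : Fin d → Fin p, F k ≤ (p:ℝ) * (2 * E) := by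
    by_contra h
    push_neg at h
    have hlt : ∑ k : Fin d → Fin p, (p:ℝ) * (2 * E) < ∑ k : Fin d → Fin p, F k :=
      Finset.sum_lt_sum_of_nonempty Finset.univ_nonempty fun k _ => h k
    rw [Finset.sum_const, Finset.card_univ, Fintype.card_fun, Fintype.card_fin,
      Fintype.card_fin, nsmul_eq_mul] at hlt
    push_cast at hlt
    linarith
  obtain ⟨k, hk⟩ := hex
  refine ⟨fun i => (k i : ℕ), fun i => (k i).isLt, fun j hj => ?_⟩
  have hSnn : ∀ j', 0 ≤ Real.exp (l * S k j') + Real.exp (-(l * S k j')) := by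
    intro j'; positivity
  have hterm : Real.exp (l * S k j) + Real.exp (-(l * S k j)) ≤ F k :=
    Finset.single_le_sum (fun j' _ => hSnn j') hj
  have habs : Real.exp (l * |S k j|) ≤ (p:ℝ) * (2 * E) := by
    rcases abs_cases (S k j) with ⟨h, _⟩ | ⟨h, _⟩
    · rw [h]
      have := Real.exp_pos (-(l * S k j))
      linarith
    · rw [h, mul_neg]
      have := Real.exp_pos (l * S k j)
      linarith
  have hlog : l * |S k j| ≤ Real.log (2 * p) + d * ε / 2 := by
    have : (p:ℝ) * (2 * E) = Real.exp (Real.log (2 * p) + d * ε / 2) := by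
      rw [Real.exp_add, Real.exp_log (by linarith : (0:ℝ) < 2 * p), hE]
      ring
    rw [this] at habs
    exact Real.exp_le_exp.mp habs
  have habs' : |S k j| < l * d := by
    have h1 : l * |S k j| < ε * d := by
      have : Real.log (2 * (p:ℝ)) + d * ε / 2 < ε * d := by linarith
      linarith
    have h2 : ε * d = l * (l * d) := by rw [← hl2]; ring
    rw [h2] at h1
    exact lt_of_mul_lt_mul_left h1 hl0.le
  have hsq : (S k j) ^ 2 < ε * d ^ 2 := by
    have := mul_self_lt_mul_self (abs_nonneg (S k j)) habs'
    calc (S k j) ^ 2 = |S k j| * |S k j| := by rw [abs_mul_abs_self]; ring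
      _ < (l * d) * (l * d) := this
      _ = ε * d ^ 2 := by rw [← hl2]; ring
  have hd2 : (0:ℝ) < (d:ℝ) ^ 2 := by positivity
  calc (1 / (d:ℝ) ^ 2) * (S k j) ^ 2 < (1 / (d:ℝ) ^ 2) * (ε * d ^ 2) := by
        exact mul_lt_mul_of_pos_left hsq (by positivity)
    _ = ε := by field_simp
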